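/- Let n ≥ 2 and let C be a beautiful n-edge-colouring of the complete graph K_{n+1}. Then K_{n+1} contains at least 2^{⌊(n-1)/2⌋} distinct heterochromatic spanning trees. -/

import Mathlib

open SimpleGraph Set

/-- The colour class of colour `i` of an edge-colouring `col` of `G`. -/
def cclass {V : Type*} (G : SimpleGraph V) (col : Sym2 V → ℕ) (i : ℕ) : Set (Sym2 V) :=
  {e ∈ G.edgeSet | col e = i}

/-- A beautiful `n`-edge-colouring of the complete graph on `V` (`|V| = n+1`):
a nice colouring (`|C_i| = i`) whose monochromatic subgraphs are acyclic, together
with a partition `{V₁, V₂}` with `|V₁| = ⌊(n+1)/2⌋`, `|V₂| = ⌈(n+1)/2⌉` such that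
(i) the union of the classes `C_i` with `i ≡ n (mod 2)` induces the complete
bipartite graph on `(V₁, V₂)`; (ii) each such class splits its vertex set as
`⌊·/2⌋ / ⌈·/2⌉` between `V₁` and `V₂`; (iii) each class `C_i` with `i ≢ n (mod 2)`
has `⌊i/2⌋` edges inside `V₁` and `⌈i/2⌉` edges inside `V₂`. -/
def IsBeautiful {V : Type*} [Fintype V] (n : ℕ) (col : Sym2 V → ℕ) : Prop :=
  (∀ e ∈ (⊤ : SimpleGraph V).edgeSet, col e ∈ Set.Icc 1 n) ∧
  (∀ i ∈ Set.Icc 1 n, (cclass (⊤ : SimpleGraph V) col i).ncard = i) ∧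
  (∀ i ∈ Set.Icc 1 n,
    (SimpleGraph.fromEdgeSet (cclass (⊤ : SimpleGraph V) col i)).IsAcyclic) ∧
  ∃ V1 V2 : Set V, V1 ∪ V2 = Set.univ ∧ Disjoint V1 V2 ∧
    V1.ncard = (n + 1) / 2 ∧ V2.ncard = (n + 2) / 2 ∧
    (∀ u v : V, u ≠ v →
      ((∃ i ∈ Set.Icc 1 n, i % 2 = n % 2 ∧ s(u, v) ∈ cclass (⊤ : SimpleGraph V) col i) ↔
        ((u ∈ V1 ∧ v ∈ V2) ∨ (u ∈ V2 ∧ v ∈ V1)))) ∧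
    (∀ i ∈ Set.Icc 1 n, i % 2 = n % 2 →
      ({v : V | ∃ e ∈ cclass (⊤ : SimpleGraph V) col i, v ∈ e} ∩ V1).ncard =
        {v : V | ∃ e ∈ cclass (⊤ : SimpleGraph V) col i, v ∈ e}.ncard / 2 ∧
      ({v : V | ∃ e ∈ cclass (⊤ : SimpleGraph V) col i, v ∈ e} ∩ V2).ncard =
        ({v : V | ∃ e ∈ cclass (⊤ : SimpleGraph V) col i, v ∈ e}.ncard + 1) / 2) ∧
    (∀ i ∈ Set.Icc 1 n, i % 2 ≠ n % 2 →
      ({e ∈ cclass (⊤ : SimpleGraph V) col i | ∀ v : V, v ∈ e → v ∈ V1}).ncard = i / 2 ∧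
      ({e ∈ cclass (⊤ : SimpleGraph V) col i | ∀ v : V, v ∈ e → v ∈ V2}).ncard = (i + 1) / 2)

namespace HSTaux
variable {V : Type*}

lemma reach_of_adj_imp {G H : SimpleGraph V} (h : ∀ a b, G.Adj a b → H.Reachable a b)
    {x y : V} (hxy : G.Reachable x y) : H.Reachable x y := by
  obtain ⟨w⟩ := hxy
  induction w with
  | nil => exact Reachable.refl _
  | cons ha _ ih => exact (h _ _ ha).trans ih

lemma reach_insert_edge {F : Set (Sym2 V)} {u v x y : V}
    (h : (fromEdgeSet (insert s(u,v) F)).Reachable x y) :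
    (fromEdgeSet F).Reachable x y ∨
      ((fromEdgeSet F).Reachable x u ∧ (fromEdgeSet F).Reachable v y) ∨
      ((fromEdgeSet F).Reachable x v ∧ (fromEdgeSet F).Reachable u y) := by
  obtain ⟨w⟩ := h
  induction w with
  | nil => exact Or.inl (Reachable.refl _)
  | cons hadj p ih =>
    rw [fromEdgeSet_adj] at hadj
    obtain ⟨hmem, hne⟩ := hadj
    rcases Set.mem_insert_iff.mp hmem with heq | hF
    · rcases Sym2.eq_iff.mp heq with ⟨rfl, rfl⟩ | ⟨rfl, rfl⟩
      · rcases ih with h1 | ⟨h1, h2⟩ | ⟨h1, h2⟩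
        · exact Or.inr (Or.inl ⟨Reachable.refl _, h1⟩)
        · exact Or.inr (Or.inl ⟨Reachable.refl _, h2⟩)
        · exact Or.inl h2
      · rcases ih with h1 | ⟨h1, h2⟩ | ⟨h1, h2⟩
        · exact Or.inr (Or.inr ⟨Reachable.refl _, h1⟩)
        · exact Or.inl h2
        · exact Or.inr (Or.inr ⟨Reachable.refl _, h2⟩)
    · have hr : (fromEdgeSet F).Reachable _ _ := ((fromEdgeSet_adj _).mpr ⟨hF, hne⟩).reachable
      rcases ih with h1 | ⟨h1, h2⟩ | ⟨h1, h2⟩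
      · exact Or.inl (hr.trans h1)
      · exact Or.inr (Or.inl ⟨hr.trans h1, h2⟩)
      · exact Or.inr (Or.inr ⟨hr.trans h1, h2⟩)

lemma acyclic_mono {G H : SimpleGraph V} (hGH : G ≤ H) (h : H.IsAcyclic) : G.IsAcyclic :=
  fun _ c hc => h (c.mapLe hGH) (hc.mapLe hGH)

variable {V : Type*}

variable {V : Type*}

/-- number of connected components of the graph on edge set `F` -/
noncomputable def ncomp (F : Set (Sym2 V)) : ℕ := Nat.card (fromEdgeSet F).ConnectedComponent

lemma comp_finite [Finite V] (G : SimpleGraph V) : Finite G.ConnectedComponent :=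
  Quot.finite _

lemma ncomp_empty [Fintype V] : ncomp (∅ : Set (Sym2 V)) = Fintype.card V := by
  rw [ncomp, fromEdgeSet_empty]
  have e : (⊥ : SimpleGraph V).ConnectedComponent ≃ V :=
    { toFun := Quot.lift id (fun a b h => reachable_bot.mp h)
      invFun := Quot.mk _
      left_inv := fun c => ConnectedComponent.ind (fun a => rfl) c
      right_inv := fun v => rfl }
  rw [Nat.card_congr e, Nat.card_eq_fintype_card]

lemma ncomp_pos [Finite V] [Nonempty V] (F : Set (Sym2 V)) : 0 < ncomp F := by
  have : Finite (fromEdgeSet F).ConnectedComponent := comp_finite _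
  have : Nonempty (fromEdgeSet F).ConnectedComponent :=
    ⟨(fromEdgeSet F).connectedComponentMk (Classical.arbitrary V)⟩
  exact Nat.card_pos

lemma ncomp_insert_eq [Finite V] {F : Set (Sym2 V)} {u v : V} (hne : u ≠ v)
    (hr : ¬ (fromEdgeSet F).Reachable u v) :
    ncomp (insert s(u,v) F) + 1 = ncomp F := by
  classical
  set G := fromEdgeSet F with hG
  set G' := fromEdgeSet (insert s(u,v) F) with hG'
  have hle : G ≤ G' := fromEdgeSet_mono (Set.subset_insert _ _)
  have hmono : ∀ a b : V, G.Reachable a b → G'.Reachable a b := fun a b h => h.mono hle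
  let φ : G.ConnectedComponent → G'.ConnectedComponent := Quot.map id (hmono)
  have hφ : ∀ x : V, φ (G.connectedComponentMk x) = G'.connectedComponentMk x := fun x => rfl
  let g : {c : G.ConnectedComponent // c ≠ G.connectedComponentMk v} → G'.ConnectedComponent :=
    fun c => φ c.1
  have hadj' : G'.Adj u v := (fromEdgeSet_adj _).mpr ⟨Set.mem_insert _ _, hne⟩
  have hginj : Function.Injective g := by
    rintro ⟨c1, h1⟩ ⟨c2, h2⟩ heq
    obtain ⟨x, rfl⟩ := c1.exists_rep
    obtain ⟨y, rfl⟩ := c2.exists_rep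
    have hxy : G'.Reachable x y := by
      have : G'.connectedComponentMk x = G'.connectedComponentMk y := heq
      exact (SimpleGraph.ConnectedComponent.eq).mp this
    rcases reach_insert_edge hxy with h | ⟨ha, hb⟩ | ⟨ha, hb⟩
    · exact Subtype.ext (ConnectedComponent.sound h)
    · exact absurd (ConnectedComponent.sound hb.symm) h2
    · exact absurd (ConnectedComponent.sound ha) h1
  have hgsurj : Function.Surjective g := by
    intro c'
    obtain ⟨x, rfl⟩ := c'.exists_rep
    by_cases hx : G.Reachable x v
    · refine ⟨⟨G.connectedComponentMk u, fun hc => hr (ConnectedComponent.eq.mp hc)⟩, ?_⟩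
      show G'.connectedComponentMk u = G'.connectedComponentMk x
      exact ConnectedComponent.sound (hadj'.reachable.trans (hmono _ _ hx).symm)
    · exact ⟨⟨G.connectedComponentMk x, fun hc => hx (ConnectedComponent.eq.mp hc)⟩, rfl⟩
  have hfin : Finite G.ConnectedComponent := comp_finite _
  have hfin' : Finite G'.ConnectedComponent := comp_finite _
  have hcard : Nat.card G'.ConnectedComponent
      = Nat.card {c : G.ConnectedComponent // c ≠ G.connectedComponentMk v} :=
    (Nat.card_eq_of_bijective g ⟨hginj, hgsurj⟩).symm
  letI : Fintype G.ConnectedComponent := Fintype.ofFinite _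
  letI : Fintype G'.ConnectedComponent := Fintype.ofFinite _
  have h1 : Nat.card {c : G.ConnectedComponent // c ≠ G.connectedComponentMk v} =
      Fintype.card G.ConnectedComponent - 1 := by
    rw [Nat.card_eq_fintype_card]
    have := Fintype.card_subtype_compl (fun c : G.ConnectedComponent => c = G.connectedComponentMk v)
    simp only [Fintype.card_subtype_eq] at this
    simpa using this
  have hpos : 0 < Fintype.card G.ConnectedComponent := Fintype.card_pos_iff.mpr
    ⟨G.connectedComponentMk v⟩
  rw [ncomp, ncomp, ← hG, ← hG', hcard, h1, Nat.card_eq_fintype_card]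
  omega


lemma sym2_rep (z : Sym2 V) : ∃ x y, z = s(x,y) :=
  Sym2.ind (fun x y => ⟨x, y, rfl⟩) z

lemma forest_card [Fintype V] [DecidableEq V] [Nonempty V] (B : Finset (Sym2 V)) :
    (∀ e ∈ B, ¬ e.IsDiag) → (fromEdgeSet (B : Set (Sym2 V))).IsAcyclic →
    B.card + ncomp (B : Set (Sym2 V)) = Fintype.card V := by
  induction B using Finset.strongInduction with
  | _ B ih =>
    intro hd ha
    rcases B.eq_empty_or_nonempty with rfl | ⟨e, he⟩
    · simpa using ncomp_empty
    · obtain ⟨u, v, rfl⟩ := sym2_rep e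
      have hne : u ≠ v := by
        intro h; exact hd _ he (by simp [h])
      have hadj : (fromEdgeSet (B : Set (Sym2 V))).Adj u v :=
        (fromEdgeSet_adj _).mpr ⟨by exact_mod_cast he, hne⟩
      have hbr := isAcyclic_iff_forall_adj_isBridge.mp ha hadj
      rw [isBridge_iff] at hbr
      have hEq : (fromEdgeSet (B : Set (Sym2 V))) \ fromEdgeSet {s(u,v)} =
          fromEdgeSet ((B.erase s(u,v) : Finset (Sym2 V)) : Set (Sym2 V)) := by
        ext a b
        simp only [sdiff_adj, fromEdgeSet_adj, Set.mem_singleton_iff, Finset.coe_erase,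
          Set.mem_diff, Finset.mem_coe]
        constructor
        · rintro ⟨⟨h1, h2⟩, h3⟩
          exact ⟨⟨h1, fun hh => h3 ⟨hh, h2⟩⟩, h2⟩
        · rintro ⟨⟨h1, h2⟩, h3⟩
          exact ⟨⟨h1, h3⟩, fun hh => h2 hh.1⟩
      rw [deleteEdges, hEq] at hbr
      have hnr := hbr
      have hins : insert s(u,v) ((B.erase s(u,v) : Finset (Sym2 V)) : Set (Sym2 V)) =
          (B : Set (Sym2 V)) := by
        rw [← Finset.coe_insert, Finset.insert_erase he]
      have hstep := ncomp_insert_eq hne hnr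
      rw [hins] at hstep
      have hsub : B.erase s(u,v) ⊆ B := Finset.erase_subset _ _
      have hIH := ih (B.erase s(u,v)) (Finset.erase_ssubset he)
        (fun e h => hd e (hsub h))
        (acyclic_mono (fromEdgeSet_mono (by exact_mod_cast hsub)) ha)
      have hc : B.card = (B.erase s(u,v)).card + 1 := by
        rw [Finset.card_erase_of_mem he]
        have : 0 < B.card := Finset.card_pos.mpr ⟨_, he⟩
        omega
      omega

lemma ncomp_le [Finite V] {F B : Set (Sym2 V)}
    (h : ∀ a b : V, (fromEdgeSet B).Adj a b → (fromEdgeSet F).Reachable a b) :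
    ncomp F ≤ ncomp B := by
  have : Finite (fromEdgeSet B).ConnectedComponent := comp_finite _
  have hmono : ∀ a b : V, (fromEdgeSet B).Reachable a b → (fromEdgeSet F).Reachable a b :=
    fun a b hab => reach_of_adj_imp h hab
  let φ : (fromEdgeSet B).ConnectedComponent → (fromEdgeSet F).ConnectedComponent :=
    Quot.map id hmono
  have hsurj : Function.Surjective φ := by
    intro c
    obtain ⟨x, rfl⟩ := c.exists_rep
    exact ⟨(fromEdgeSet B).connectedComponentMk x, rfl⟩
  exact Nat.card_le_card_of_surjective φ hsurj

lemma ncomp_lt [Finite V] {F B : Set (Sym2 V)}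
    (h : ∀ a b : V, (fromEdgeSet B).Adj a b → (fromEdgeSet F).Reachable a b)
    {a b : V} (hadj : (fromEdgeSet F).Adj a b) (hnr : ¬ (fromEdgeSet B).Reachable a b) :
    ncomp F < ncomp B := by
  have hf1 : Finite (fromEdgeSet B).ConnectedComponent := comp_finite _
  have hf2 : Finite (fromEdgeSet F).ConnectedComponent := comp_finite _
  letI : Fintype (fromEdgeSet B).ConnectedComponent := Fintype.ofFinite _
  letI : Fintype (fromEdgeSet F).ConnectedComponent := Fintype.ofFinite _
  have hmono : ∀ a b : V, (fromEdgeSet B).Reachable a b → (fromEdgeSet F).Reachable a b :=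
    fun a b hab => reach_of_adj_imp h hab
  let φ : (fromEdgeSet B).ConnectedComponent → (fromEdgeSet F).ConnectedComponent :=
    Quot.map id hmono
  have hsurj : Function.Surjective φ := by
    intro c
    obtain ⟨x, rfl⟩ := c.exists_rep
    exact ⟨(fromEdgeSet B).connectedComponentMk x, rfl⟩
  have hninj : ¬ Function.Injective φ := by
    intro hinj
    have h1 : φ ((fromEdgeSet B).connectedComponentMk a)
        = φ ((fromEdgeSet B).connectedComponentMk b) :=
      ConnectedComponent.sound hadj.reachable
    exact hnr (ConnectedComponent.eq.mp (hinj h1))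
  have := Fintype.card_lt_of_surjective_not_injective φ hsurj hninj
  rw [ncomp, ncomp, Nat.card_eq_fintype_card, Nat.card_eq_fintype_card]
  exact this

lemma acyclic_insert {F : Set (Sym2 V)} {u v : V} (hne : u ≠ v)
    (ha : (fromEdgeSet F).IsAcyclic) (hnr : ¬ (fromEdgeSet F).Reachable u v) :
    (fromEdgeSet (insert s(u,v) F)).IsAcyclic := by
  set G' := fromEdgeSet (insert s(u,v) F) with hG'
  have hadj' : G'.Adj u v := (fromEdgeSet_adj _).mpr ⟨Set.mem_insert _ _, hne⟩
  have hdel : G' \ fromEdgeSet {s(u,v)} ≤ fromEdgeSet F := by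
    intro a b hab
    rw [sdiff_adj, hG', fromEdgeSet_adj, fromEdgeSet_adj] at hab
    obtain ⟨⟨h1, h2⟩, h3⟩ := hab
    rcases Set.mem_insert_iff.mp h1 with heq | hF
    · exact absurd ⟨heq, h2⟩ h3
    · exact (fromEdgeSet_adj _).mpr ⟨hF, h2⟩
  have hbridge : G'.IsBridge s(u,v) := by
    rw [isBridge_iff]
    exact fun hr => hnr (reach_of_adj_imp
      (fun a b hab => ((hdel hab).reachable)) hr)
  intro w c hc
  by_cases hmem : s(u,v) ∈ c.edges
  · exact (isBridge_iff_adj_and_forall_cycle_notMem ((mem_edgeSet _).mpr hadj')).mp hbridge c hc hmem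
  · have hces : ∀ e ∈ c.edges, e ∈ (fromEdgeSet F).edgeSet := by
      intro e hee
      have : e ∈ G'.edgeSet := c.edges_subset_edgeSet hee
      rw [hG', edgeSet_fromEdgeSet] at this
      obtain ⟨h1, h2⟩ := this
      rcases Set.mem_insert_iff.mp h1 with heq | hF
      · exact absurd (heq ▸ hee) hmem
      · rw [edgeSet_fromEdgeSet]; exact ⟨hF, h2⟩
    exact ha (c.transfer _ hces) (hc.transfer _)

lemma reach_side {G : SimpleGraph V} {P : V → Prop} (h : ∀ a b : V, G.Adj a b → (P a ↔ P b))
    {x y : V} (hr : G.Reachable x y) : P x ↔ P y := by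
  obtain ⟨w⟩ := hr
  induction w with
  | nil => exact Iff.rfl
  | cons ha _ ih => exact (h _ _ ha).trans ih

open scoped Classical in
noncomputable def pickb {α : Type*} [LinearOrder α] [Nonempty α] (S : Finset α) (b : Bool) : α :=
  if h : S.Nonempty then
    if h2 : b = true ∧ 2 ≤ S.card then
      (S.erase (S.min' h)).min' (Finset.card_pos.mp
        (by rw [Finset.card_erase_of_mem (S.min'_mem h)]; omega))
    else S.min' h
  else Classical.arbitrary α

lemma pickb_mem {α : Type*} [LinearOrder α] [Nonempty α] {S : Finset α} (h : S.Nonempty)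
    (b : Bool) : pickb S b ∈ S := by
  classical
  rw [pickb, dif_pos h]
  split
  · exact Finset.mem_of_mem_erase (Finset.min'_mem _ _)
  · exact S.min'_mem h

lemma pickb_ne {α : Type*} [LinearOrder α] [Nonempty α] {S : Finset α} (h2 : 2 ≤ S.card)
    {b b' : Bool} (hbb : b ≠ b') : pickb S b ≠ pickb S b' := by
  classical
  have h : S.Nonempty := Finset.card_pos.mp (by omega)
  have key : pickb S true ≠ pickb S false := by
    rw [pickb, pickb, dif_pos h, dif_pos h, dif_pos ⟨rfl, h2⟩,
      dif_neg (by simp)]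
    have := Finset.min'_mem (S.erase (S.min' h)) (Finset.card_pos.mp
      (by rw [Finset.card_erase_of_mem (S.min'_mem h)]; omega))
    exact (Finset.mem_erase.mp this).1
  cases b <;> cases b' <;> simp_all <;> exact fun hh => key hh.symm

noncomputable def conn (F : Finset (Sym2 V)) : Sym2 V → Prop :=
  Sym2.lift ⟨fun a b => (fromEdgeSet (F : Set (Sym2 V))).Reachable a b,
    fun a b => propext reachable_comm⟩

lemma conn_mk (F : Finset (Sym2 V)) (a b : V) :
    conn F s(a,b) ↔ (fromEdgeSet (F : Set (Sym2 V))).Reachable a b := by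
  simp [conn]

open scoped Classical in
noncomputable def build [LinearOrder (Sym2 V)] [Nonempty (Sym2 V)]
    (Ci : ℕ → Finset (Sym2 V)) (σ : ℕ → Bool) : ℕ → Finset (Sym2 V)
  | 0 => ∅
  | j+1 => insert (pickb ((Ci (j+1)).filter fun e => ¬ conn (build Ci σ j) e) (σ (j+1)))
      (build Ci σ j)

open scoped Classical in
noncomputable def goodS [LinearOrder (Sym2 V)] [Nonempty (Sym2 V)]
    (Ci : ℕ → Finset (Sym2 V)) (σ : ℕ → Bool) (j : ℕ) : Finset (Sym2 V) :=
  (Ci (j+1)).filter fun e => ¬ conn (build Ci σ j) e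

lemma build_succ [LinearOrder (Sym2 V)] [Nonempty (Sym2 V)] [DecidableEq (Sym2 V)]
    (Ci : ℕ → Finset (Sym2 V)) (σ : ℕ → Bool) (j : ℕ) :
    build Ci σ (j+1) = insert (pickb (goodS Ci σ j) (σ (j+1))) (build Ci σ j) := by
  rw [build, goodS]
  congr 1
  · congr 1
    exact Subsingleton.elim _ _

lemma build_zero [LinearOrder (Sym2 V)] [Nonempty (Sym2 V)]
    (Ci : ℕ → Finset (Sym2 V)) (σ : ℕ → Bool) : build Ci σ 0 = ∅ := by
  rw [build]

lemma build_congr [LinearOrder (Sym2 V)] [Nonempty (Sym2 V)]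
    (Ci : ℕ → Finset (Sym2 V)) {σ τ : ℕ → Bool} {j : ℕ}
    (h : ∀ t, t ≤ j → σ t = τ t) : build Ci σ j = build Ci τ j := by
  induction j with
  | zero => rfl
  | succ j ih =>
    have hb : build Ci σ j = build Ci τ j := ih (fun t ht => h t (Nat.le_succ_of_le ht))
    rw [build_succ, build_succ, goodS, goodS, hb, h (j+1) le_rfl]

end HSTaux

/-- a beautiful `n`-edge-colouring of `K_{n+1}` (`n ≥ 2`) yields at least
`2^{⌊(n-1)/2⌋}` distinct heterochromatic spanning trees. -/
theorem stmt5 (n : ℕ) (hn : 2 ≤ n) (col : Sym2 (Fin (n + 1)) → ℕ)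
    (hbeautiful : IsBeautiful n col) :
    2 ^ ((n - 1) / 2) ≤
      {T : SimpleGraph (Fin (n + 1)) | T.IsTree ∧ Set.InjOn col T.edgeSet}.ncard := by
  classical
  obtain ⟨hcol, hcard, hacyc, V1, V2, hunion, hdisj, hV1, hV2, hcross, hmatchsplit, hinside⟩ :=
    hbeautiful
  letI : LinearOrder (Sym2 (Fin (n+1))) :=
    LinearOrder.lift' (Fintype.equivFin (Sym2 (Fin (n+1)))) (Equiv.injective _)
  haveI : Nonempty (Sym2 (Fin (n+1))) := ⟨s(0, 0)⟩
  set CiF : ℕ → Finset (Sym2 (Fin (n+1))) :=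
    fun i => (Set.toFinite (cclass (⊤ : SimpleGraph (Fin (n+1))) col i)).toFinset with hCiF
  have hmemCi : ∀ i e, e ∈ CiF i ↔ (¬ e.IsDiag ∧ col e = i) := by
    intro i e
    rw [hCiF]
    rw [Set.Finite.mem_toFinset]
    show e ∈ {e ∈ (⊤ : SimpleGraph (Fin (n+1))).edgeSet | col e = i} ↔ _
    rw [Set.mem_sep_iff, edgeSet_top]
    simp
  have hcoeCi : ∀ i, ((CiF i : Set (Sym2 (Fin (n+1))))) =
      cclass (⊤ : SimpleGraph (Fin (n+1))) col i := by
    intro i; rw [hCiF]; exact Set.Finite.coe_toFinset _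
  have hdiagCi : ∀ i e, e ∈ CiF i → ¬ e.IsDiag := fun i e he => ((hmemCi i e).mp he).1
  have hcolCi : ∀ i e, e ∈ CiF i → col e = i := fun i e he => ((hmemCi i e).mp he).2
  have hcardCi : ∀ i, 1 ≤ i → i ≤ n → (CiF i).card = i := by
    intro i h1 h2
    have := hcard i (Set.mem_Icc.mpr ⟨h1, h2⟩)
    rw [Set.ncard_eq_toFinset_card _ (Set.toFinite _)] at this
    exact this
  have hacycCi : ∀ i, 1 ≤ i → i ≤ n →
      (fromEdgeSet ((CiF i : Set (Sym2 (Fin (n+1)))))).IsAcyclic := by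
    intro i h1 h2
    rw [hcoeCi]
    exact hacyc i (Set.mem_Icc.mpr ⟨h1, h2⟩)
  have hdisjCi : ∀ i j e, e ∈ CiF i → e ∈ CiF j → i = j := by
    intro i j e hi hj
    rw [← hcolCi i e hi, ← hcolCi j e hj]
  -- the smallest colour with the same parity as n
  set c0 : ℕ := if n % 2 = 0 then 2 else 1 with hc0def
  have hc0 : 1 ≤ c0 ∧ c0 ≤ n ∧ c0 % 2 = n % 2 := by
    rw [hc0def]
    rcases Nat.mod_two_eq_zero_or_one n with h | h
    · rw [if_pos h]; omega
    · rw [if_neg (by omega)]; omega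
  -- matching-parity classes consist of cross edges
  have hcrossC : ∀ i, 1 ≤ i → i ≤ n → i % 2 = n % 2 → ∀ e ∈ CiF i,
      ∃ a b, e = s(a,b) ∧ a ∈ V1 ∧ b ∈ V2 := by
    intro i h1 h2 hp e he
    obtain ⟨u, v, rfl⟩ := HSTaux.sym2_rep e
    have hne : u ≠ v := by
      intro h; exact hdiagCi i _ he (by simp [h])
    have hmem : s(u,v) ∈ cclass (⊤ : SimpleGraph (Fin (n+1))) col i := by
      rw [← hcoeCi]; exact_mod_cast he
    have := (hcross u v hne).mp ⟨i, Set.mem_Icc.mpr ⟨h1, h2⟩, hp, hmem⟩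
    rcases this with ⟨hu, hv⟩ | ⟨hu, hv⟩
    · exact ⟨u, v, rfl, hu, hv⟩
    · exact ⟨v, u, Sym2.eq_swap, hv, hu⟩
  -- mismatching-parity classes consist of edges inside V1 or inside V2
  have hsideC : ∀ i, 1 ≤ i → i ≤ n → i % 2 ≠ n % 2 → ∀ e ∈ CiF i,
      (∀ x ∈ e, x ∈ V1) ∨ (∀ x ∈ e, x ∈ V2) := by
    intro i h1 h2 hp e he
    obtain ⟨hA1, hA2⟩ := hinside i (Set.mem_Icc.mpr ⟨h1, h2⟩) hp
    set A1 : Set (Sym2 (Fin (n+1))) :=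
      {e ∈ cclass (⊤ : SimpleGraph (Fin (n+1))) col i | ∀ x : Fin (n+1), x ∈ e → x ∈ V1} with hA1d
    set A2 : Set (Sym2 (Fin (n+1))) :=
      {e ∈ cclass (⊤ : SimpleGraph (Fin (n+1))) col i | ∀ x : Fin (n+1), x ∈ e → x ∈ V2} with hA2d
    set a1 := (Set.toFinite A1).toFinset with ha1d
    set a2 := (Set.toFinite A2).toFinset with ha2d
    have hsub1 : a1 ⊆ CiF i := by
      intro x hx
      rw [ha1d, Set.Finite.mem_toFinset] at hx
      rw [hCiF, Set.Finite.mem_toFinset]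
      exact hx.1
    have hsub2 : a2 ⊆ CiF i := by
      intro x hx
      rw [ha2d, Set.Finite.mem_toFinset] at hx
      rw [hCiF, Set.Finite.mem_toFinset]
      exact hx.1
    have hd12 : Disjoint a1 a2 := by
      rw [Finset.disjoint_left]
      intro x hx1 hx2
      rw [ha1d, Set.Finite.mem_toFinset] at hx1
      rw [ha2d, Set.Finite.mem_toFinset] at hx2
      obtain ⟨u, v, rfl⟩ := HSTaux.sym2_rep x
      have h1' : u ∈ V1 := hx1.2 u (Sym2.mem_mk_left _ _)
      have h2' : u ∈ V2 := hx2.2 u (Sym2.mem_mk_left _ _)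
      exact Set.disjoint_left.mp hdisj h1' h2'
    have hca1 : a1.card = i / 2 := by
      rw [ha1d, ← Set.ncard_eq_toFinset_card _ (Set.toFinite _)]; exact hA1
    have hca2 : a2.card = (i + 1) / 2 := by
      rw [ha2d, ← Set.ncard_eq_toFinset_card _ (Set.toFinite _)]; exact hA2
    have hunioncard : (a1 ∪ a2).card = (CiF i).card := by
      rw [Finset.card_union_of_disjoint hd12, hca1, hca2, hcardCi i h1 h2]
      omega
    have hequ : a1 ∪ a2 = CiF i :=
      Finset.eq_of_subset_of_card_le (Finset.union_subset hsub1 hsub2) (le_of_eq hunioncard.symm)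
    rw [← hequ] at he
    rcases Finset.mem_union.mp he with h | h
    · left
      rw [ha1d, Set.Finite.mem_toFinset] at h
      exact h.2
    · right
      rw [ha2d, Set.Finite.mem_toFinset] at h
      exact h.2
  -- branching colours
  set bc : Finset ℕ := (Finset.range ((n-1)/2)).image (fun j => n - 1 - 2*j) with hbcdef
  have hbcmem : ∀ i ∈ bc, 2 ≤ i ∧ i ≤ n ∧ i % 2 ≠ n % 2 ∧ c0 < i := by
    intro i hi
    rw [hbcdef, Finset.mem_image] at hi
    obtain ⟨j, hj, rfl⟩ := hi
    rw [Finset.mem_range] at hj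
    refine ⟨by omega, by omega, by omega, ?_⟩
    rw [hc0def]
    rcases Nat.mod_two_eq_zero_or_one n with h | h
    · rw [if_pos h]; omega
    · rw [if_neg (by omega)]; omega
  have hbccard : bc.card = (n-1)/2 := by
    rw [hbcdef, Finset.card_image_of_injOn, Finset.card_range]
    intro a ha b hb hab
    simp only [Finset.coe_range, Set.mem_Iio] at ha hb
    dsimp only at hab
    omega
  -- good sets are nonempty, and have at least 2 elements at branching colours
  have goodfacts : ∀ (σ : ℕ → Bool) (j : ℕ), j < n →
      HSTaux.ncomp ((HSTaux.build CiF σ j : Finset (Sym2 (Fin (n+1)))) : Set (Sym2 (Fin (n+1))))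
        = (n+1) - j →
      (c0 ≤ j → ∃ a b, s(a,b) ∈ HSTaux.build CiF σ j ∧ a ∈ V1 ∧ b ∈ V2) →
      (HSTaux.goodS CiF σ j).Nonempty ∧ ((j+1) ∈ bc → 2 ≤ (HSTaux.goodS CiF σ j).card) := by
    intro σ j hjn hcomp hcrossF
    set F := HSTaux.build CiF σ j with hFdef
    set bad := (CiF (j+1)).filter (fun e => HSTaux.conn F e) with hbaddef
    have hgs : HSTaux.goodS CiF σ j = Finset.filter (fun a => ¬ HSTaux.conn F a) (CiF (j + 1)) := by
      rw [HSTaux.goodS, hFdef]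
    have hsplit : bad.card + (HSTaux.goodS CiF σ j).card = j + 1 := by
      have h0 := Finset.card_filter_add_card_filter_not
        (s := CiF (j+1)) (p := fun e => HSTaux.conn F e)
      rw [hcardCi (j+1) (by omega) (by omega)] at h0
      rw [hbaddef, hgs]
      exact h0
    have hbadsub : (bad : Set (Sym2 (Fin (n+1)))) ⊆ (CiF (j+1) : Set (Sym2 (Fin (n+1)))) := by
      exact_mod_cast Finset.filter_subset _ _
    have hbadcard : bad.card + HSTaux.ncomp ((bad : Finset (Sym2 (Fin (n+1)))) :
        Set (Sym2 (Fin (n+1)))) = n + 1 := by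
      have := HSTaux.forest_card (V := Fin (n+1)) bad
        (fun e he => hdiagCi (j+1) e (Finset.filter_subset _ _ he))
        (HSTaux.acyclic_mono (fromEdgeSet_mono hbadsub) (hacycCi (j+1) (by omega) (by omega)))
      rwa [Fintype.card_fin] at this
    have hadjreach : ∀ a b : Fin (n+1),
        (fromEdgeSet ((bad : Finset (Sym2 (Fin (n+1)))) : Set (Sym2 (Fin (n+1))))).Adj a b →
        (fromEdgeSet ((F : Finset (Sym2 (Fin (n+1)))) : Set (Sym2 (Fin (n+1))))).Reachable a b := by
      intro a b hab
      rw [fromEdgeSet_adj] at hab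
      have := Finset.mem_coe.mp hab.1
      rw [hbaddef, Finset.mem_filter] at this
      exact (HSTaux.conn_mk F a b).mp this.2
    have hle := HSTaux.ncomp_le hadjreach
    constructor
    · rw [← Finset.card_pos]
      omega
    · intro hibc
      obtain ⟨h2i, hin, hpar, hc0lt⟩ := hbcmem _ hibc
      obtain ⟨a, b, hab, ha1, hb2⟩ := hcrossF (by omega)
      have hnab : a ≠ b := fun h => Set.disjoint_left.mp hdisj (h ▸ ha1) hb2
      have hadjF : (fromEdgeSet ((F : Finset (Sym2 (Fin (n+1)))) :
          Set (Sym2 (Fin (n+1))))).Adj a b :=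
        (fromEdgeSet_adj _).mpr ⟨Finset.mem_coe.mpr hab, hnab⟩
      have hnreach : ¬ (fromEdgeSet ((bad : Finset (Sym2 (Fin (n+1)))) :
          Set (Sym2 (Fin (n+1))))).Reachable a b := by
        intro hr
        have hside : ∀ x y : Fin (n+1),
            (fromEdgeSet ((bad : Finset (Sym2 (Fin (n+1)))) :
              Set (Sym2 (Fin (n+1))))).Adj x y → ((x ∈ V1) ↔ (y ∈ V1)) := by
          intro x y hxy
          rw [fromEdgeSet_adj] at hxy
          have hm : s(x,y) ∈ CiF (j+1) :=
            Finset.filter_subset _ _ (Finset.mem_coe.mp hxy.1)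
          rcases hsideC (j+1) (by omega) hin hpar _ hm with hall | hall
          · simp [hall x (Sym2.mem_mk_left _ _), hall y (Sym2.mem_mk_right _ _)]
          · have hx2 := hall x (Sym2.mem_mk_left _ _)
            have hy2 := hall y (Sym2.mem_mk_right _ _)
            exact iff_of_false (fun h => Set.disjoint_left.mp hdisj h hx2)
              (fun h => Set.disjoint_left.mp hdisj h hy2)
        have := (HSTaux.reach_side hside hr).mp ha1
        exact Set.disjoint_left.mp hdisj this hb2
      have hlt := HSTaux.ncomp_lt hadjreach hadjF hnreach
      omega
  -- the main induction: properties of the greedily built forests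
  have main : ∀ (σ : ℕ → Bool) (j : ℕ), j ≤ n →
      (∀ e, e ∈ HSTaux.build CiF σ j ↔
        ∃ t, 1 ≤ t ∧ t ≤ j ∧ e = HSTaux.pickb (HSTaux.goodS CiF σ (t-1)) (σ t)) ∧
      (∀ t, 1 ≤ t → t ≤ j → HSTaux.pickb (HSTaux.goodS CiF σ (t-1)) (σ t) ∈ CiF t) ∧
      (HSTaux.build CiF σ j).card = j ∧
      HSTaux.ncomp ((HSTaux.build CiF σ j : Finset (Sym2 (Fin (n+1)))) :
        Set (Sym2 (Fin (n+1)))) = (n+1) - j ∧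
      (fromEdgeSet ((HSTaux.build CiF σ j : Finset (Sym2 (Fin (n+1)))) :
        Set (Sym2 (Fin (n+1))))).IsAcyclic ∧
      (c0 ≤ j → ∃ a b, s(a,b) ∈ HSTaux.build CiF σ j ∧ a ∈ V1 ∧ b ∈ V2) := by
    intro σ j
    induction j with
    | zero =>
      intro _
      refine ⟨?_, ?_, ?_, ?_, ?_, ?_⟩
      · intro e
        rw [HSTaux.build_zero]
        simp only [Finset.notMem_empty, false_iff]
        rintro ⟨t, h1, h2, -⟩
        omega
      · intro t h1 h2
        omega
      · rw [HSTaux.build_zero]; rfl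
      · rw [HSTaux.build_zero, Finset.coe_empty, HSTaux.ncomp_empty, Fintype.card_fin]
        omega
      · rw [HSTaux.build_zero, Finset.coe_empty, fromEdgeSet_empty]
        exact isAcyclic_bot
      · intro h
        exact absurd h (by omega)
    | succ j ih =>
      intro hj1
      obtain ⟨iha, ihg, ihcard, ihcomp, ihacyc, ihcross⟩ := ih (by omega)
      obtain ⟨hgdne, hgd2⟩ := goodfacts σ j (by omega) ihcomp ihcross
      set ep := HSTaux.pickb (HSTaux.goodS CiF σ j) (σ (j+1)) with hepdef
      have hb1 : HSTaux.build CiF σ (j+1) = insert ep (HSTaux.build CiF σ j) :=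
        HSTaux.build_succ CiF σ j
      have hepgd : ep ∈ HSTaux.goodS CiF σ j := HSTaux.pickb_mem hgdne _
      have hepfil := hepgd
      rw [HSTaux.goodS, Finset.mem_filter] at hepfil
      have hepCi : ep ∈ CiF (j+1) := hepfil.1
      have hepnconn : ¬ HSTaux.conn (HSTaux.build CiF σ j) ep := hepfil.2
      obtain ⟨u, v, huv⟩ := HSTaux.sym2_rep ep
      have hneuv : u ≠ v := by
        intro h
        apply hdiagCi (j+1) ep hepCi
        rw [huv, h]
        simp
      have hnr : ¬ (fromEdgeSet ((HSTaux.build CiF σ j : Finset (Sym2 (Fin (n+1)))) :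
          Set (Sym2 (Fin (n+1))))).Reachable u v := by
        intro h
        apply hepnconn
        rw [huv]
        exact (HSTaux.conn_mk _ u v).mpr h
      have hepnotF : ep ∉ HSTaux.build CiF σ j := by
        intro h
        obtain ⟨t, ht1, ht2, hte⟩ := (iha ep).mp h
        have h1 : ep ∈ CiF t := by rw [hte]; exact ihg t ht1 ht2
        have := hdisjCi t (j+1) ep h1 hepCi
        omega
      refine ⟨?_, ?_, ?_, ?_, ?_, ?_⟩
      · intro e
        rw [hb1, Finset.mem_insert]
        constructor
        · rintro (rfl | h)
          · exact ⟨j+1, by omega, le_rfl, hepdef⟩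
          · obtain ⟨t, h1, h2, h3⟩ := (iha e).mp h
            exact ⟨t, h1, by omega, h3⟩
        · rintro ⟨t, h1, h2, h3⟩
          rcases Nat.lt_or_ge t (j+1) with hlt | hge
          · right
            exact (iha e).mpr ⟨t, h1, by omega, h3⟩
          · left
            have ht : t = j + 1 := by omega
            subst ht
            exact h3.trans hepdef.symm
      · intro t h1 h2
        rcases Nat.lt_or_ge t (j+1) with hlt | hge
        · exact ihg t h1 (by omega)
        · have ht : t = j + 1 := by omega
          subst ht
          exact hepCi
      · rw [hb1, Finset.card_insert_of_notMem hepnotF, ihcard]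
      · rw [hb1, Finset.coe_insert, huv]
        have hstep := HSTaux.ncomp_insert_eq hneuv hnr
        omega
      · rw [hb1, Finset.coe_insert, huv]
        exact HSTaux.acyclic_insert hneuv ihacyc hnr
      · intro hc0j
        rcases Nat.lt_or_ge j c0 with hlt | hge
        · have hcc : c0 = j + 1 := by omega
          obtain ⟨a, b, heq, ha, hb⟩ := hcrossC (j+1) (by omega) (by omega)
            (by rw [← hcc]; exact hc0.2.2) ep hepCi
          refine ⟨a, b, ?_, ha, hb⟩
          rw [hb1, ← heq]
          exact Finset.mem_insert_self _ _
        · obtain ⟨a, b, hab, ha, hb⟩ := ihcross hge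
          refine ⟨a, b, ?_, ha, hb⟩
          rw [hb1]
          exact Finset.mem_insert_of_mem hab
  -- facts about the completed trees
  have hfacts : ∀ σb : ℕ → Bool,
      (fromEdgeSet ((HSTaux.build CiF σb n : Finset (Sym2 (Fin (n+1)))) :
        Set (Sym2 (Fin (n+1))))).edgeSet
        = ((HSTaux.build CiF σb n : Finset (Sym2 (Fin (n+1)))) : Set (Sym2 (Fin (n+1)))) ∧
      (fromEdgeSet ((HSTaux.build CiF σb n : Finset (Sym2 (Fin (n+1)))) :
        Set (Sym2 (Fin (n+1))))).IsTree ∧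
      Set.InjOn col (fromEdgeSet ((HSTaux.build CiF σb n : Finset (Sym2 (Fin (n+1)))) :
        Set (Sym2 (Fin (n+1))))).edgeSet := by
    intro σb
    obtain ⟨ha, hg, hcard', hcomp', hacyc', -⟩ := main σb n le_rfl
    have hmemC : ∀ e, e ∈ HSTaux.build CiF σb n → ∃ t, 1 ≤ t ∧ t ≤ n ∧ e ∈ CiF t := by
      intro e he
      obtain ⟨t, h1, h2, h3⟩ := (ha e).mp he
      exact ⟨t, h1, h2, h3 ▸ hg t h1 h2⟩
    have hES : (fromEdgeSet ((HSTaux.build CiF σb n : Finset (Sym2 (Fin (n+1)))) :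
        Set (Sym2 (Fin (n+1))))).edgeSet
        = ((HSTaux.build CiF σb n : Finset (Sym2 (Fin (n+1)))) : Set (Sym2 (Fin (n+1)))) := by
      rw [edgeSet_fromEdgeSet]
      apply sdiff_eq_left.mpr
      rw [Set.disjoint_left]
      intro e hmem hd
      obtain ⟨t, h1, h2, h3⟩ := hmemC e (Finset.mem_coe.mp hmem)
      exact absurd hd (hdiagCi t e h3)
    refine ⟨hES, ⟨?_, hacyc'⟩, ?_⟩
    · rw [connected_iff]
      refine ⟨?_, inferInstance⟩
      intro x y
      have h1 : HSTaux.ncomp ((HSTaux.build CiF σb n : Finset (Sym2 (Fin (n+1)))) :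
          Set (Sym2 (Fin (n+1)))) = 1 := by rw [hcomp']; omega
      rw [HSTaux.ncomp] at h1
      have hsub : Subsingleton (fromEdgeSet ((HSTaux.build CiF σb n :
          Finset (Sym2 (Fin (n+1)))) : Set (Sym2 (Fin (n+1))))).ConnectedComponent :=
        (Nat.card_eq_one_iff_unique.mp h1).1
      exact ConnectedComponent.eq.mp (Subsingleton.elim _ _)
    · intro e he e' he' hco
      rw [hES] at he he'
      obtain ⟨t, h1, h2, h3⟩ := (ha e).mp (Finset.mem_coe.mp he)
      obtain ⟨t', h1', h2', h3'⟩ := (ha e').mp (Finset.mem_coe.mp he')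
      have hct : col e = t := hcolCi t e (h3 ▸ hg t h1 h2)
      have hct' : col e' = t' := hcolCi t' e' (h3' ▸ hg t' h1' h2')
      have htt : t = t' := by rw [← hct, ← hct', hco]
      rw [h3, h3', htt]
  -- the injection from branch-bit vectors to trees
  set extb : ({x // x ∈ bc} → Bool) → (ℕ → Bool) :=
    fun σ i => if h : i ∈ bc then σ ⟨i, h⟩ else false with hextdef
  have hPhiInj : ∀ σ τ : {x // x ∈ bc} → Bool,
      fromEdgeSet ((HSTaux.build CiF (extb σ) n : Finset (Sym2 (Fin (n+1)))) :
        Set (Sym2 (Fin (n+1))))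
      = fromEdgeSet ((HSTaux.build CiF (extb τ) n : Finset (Sym2 (Fin (n+1)))) :
        Set (Sym2 (Fin (n+1)))) → σ = τ := by
    intro σ τ heq
    by_contra hnst
    obtain ⟨x, hx⟩ := Function.ne_iff.mp hnst
    have hExtNe : extb σ x.1 ≠ extb τ x.1 := by
      obtain ⟨xv, xp⟩ := x
      rw [hextdef]
      simpa [dif_pos xp] using hx
    set D := bc.filter (fun i => extb σ i ≠ extb τ i) with hD
    have hDne : D.Nonempty := ⟨x.1, by rw [hD, Finset.mem_filter]; exact ⟨x.2, hExtNe⟩⟩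
    set i0 := D.min' hDne with hi0
    have hi0D : i0 ∈ D := D.min'_mem hDne
    rw [hD, Finset.mem_filter] at hi0D
    obtain ⟨hi0bc, hi0ne⟩ := hi0D
    obtain ⟨h2i0, hi0n, -, -⟩ := hbcmem i0 hi0bc
    have hagree : ∀ t, t ≤ i0 - 1 → extb σ t = extb τ t := by
      intro t ht
      by_contra hne2
      have htbc : t ∈ bc := by
        by_contra htn
        apply hne2
        rw [hextdef]
        simp [dif_neg htn]
      have : i0 ≤ t := D.min'_le t (by rw [hD, Finset.mem_filter]; exact ⟨htbc, hne2⟩)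
      omega
    have hbeq : HSTaux.build CiF (extb σ) (i0-1) = HSTaux.build CiF (extb τ) (i0-1) :=
      HSTaux.build_congr CiF hagree
    obtain ⟨-, -, -, hcompσ, -, hcrossσ⟩ := main (extb σ) (i0-1) (by omega)
    obtain ⟨-, hgd2σ⟩ := goodfacts (extb σ) (i0-1) (by omega) hcompσ hcrossσ
    have hi0eq : i0 - 1 + 1 = i0 := by omega
    have hcard2 : 2 ≤ (HSTaux.goodS CiF (extb σ) (i0-1)).card :=
      hgd2σ (by rw [hi0eq]; exact hi0bc)
    have hpickne : HSTaux.pickb (HSTaux.goodS CiF (extb σ) (i0-1)) (extb σ i0)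
        ≠ HSTaux.pickb (HSTaux.goodS CiF (extb σ) (i0-1)) (extb τ i0) :=
      HSTaux.pickb_ne hcard2 hi0ne
    obtain ⟨haσ, hgσ, -, -, -, -⟩ := main (extb σ) n le_rfl
    obtain ⟨haτ, hgτ, -, -, -, -⟩ := main (extb τ) n le_rfl
    have heσ : HSTaux.pickb (HSTaux.goodS CiF (extb σ) (i0-1)) (extb σ i0)
        ∈ HSTaux.build CiF (extb σ) n :=
      (haσ _).mpr ⟨i0, by omega, by omega, rfl⟩
    have hFeq : HSTaux.build CiF (extb σ) n = HSTaux.build CiF (extb τ) n := by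
      have h2 := congrArg SimpleGraph.edgeSet heq
      rw [(hfacts (extb σ)).1, (hfacts (extb τ)).1] at h2
      exact Finset.coe_injective h2
    have heτ : HSTaux.pickb (HSTaux.goodS CiF (extb σ) (i0-1)) (extb σ i0)
        ∈ HSTaux.build CiF (extb τ) n := hFeq ▸ heσ
    obtain ⟨t', h1', h2', h3'⟩ := (haτ _).mp heτ
    have hc1 : HSTaux.pickb (HSTaux.goodS CiF (extb σ) (i0-1)) (extb σ i0) ∈ CiF i0 :=
      hgσ i0 (by omega) (by omega)
    have hc2 : HSTaux.pickb (HSTaux.goodS CiF (extb σ) (i0-1)) (extb σ i0) ∈ CiF t' :=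
      h3' ▸ hgτ t' h1' h2'
    have ht' : t' = i0 := hdisjCi t' i0 _ hc2 hc1
    rw [ht'] at h3'
    have hgseq : HSTaux.goodS CiF (extb τ) (i0-1) = HSTaux.goodS CiF (extb σ) (i0-1) := by
      rw [HSTaux.goodS, HSTaux.goodS, hbeq]
    rw [hgseq] at h3'
    exact hpickne h3'
  -- final counting
  have hmemS : ∀ σ : {x // x ∈ bc} → Bool,
      fromEdgeSet ((HSTaux.build CiF (extb σ) n : Finset (Sym2 (Fin (n+1)))) :
        Set (Sym2 (Fin (n+1))))
      ∈ {T : SimpleGraph (Fin (n + 1)) | T.IsTree ∧ Set.InjOn col T.edgeSet} :=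
    fun σ => ⟨(hfacts (extb σ)).2.1, (hfacts (extb σ)).2.2⟩
  haveI : Fintype ↥{T : SimpleGraph (Fin (n + 1)) | T.IsTree ∧ Set.InjOn col T.edgeSet} :=
    Set.Finite.fintype (Set.toFinite _)
  have hfinj : Function.Injective
      (fun σ : {x // x ∈ bc} → Bool =>
        (⟨_, hmemS σ⟩ : ↥{T : SimpleGraph (Fin (n + 1)) | T.IsTree ∧ Set.InjOn col T.edgeSet})) :=
    fun σ τ h => hPhiInj σ τ (congrArg Subtype.val h)
  calc 2 ^ ((n-1)/2) = Fintype.card ({x // x ∈ bc} → Bool) := by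
        rw [Fintype.card_fun, Fintype.card_bool, Fintype.card_coe, hbccard]
    _ ≤ Fintype.card ↥{T : SimpleGraph (Fin (n + 1)) | T.IsTree ∧ Set.InjOn col T.edgeSet} :=
        Fintype.card_le_of_injective _ hfinj
    _ = {T : SimpleGraph (Fin (n + 1)) | T.IsTree ∧ Set.InjOn col T.edgeSet}.ncard := by
        rw [Set.ncard_eq_toFinset_card', Set.toFinset_card]
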